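/- Let H = [[A,B],[C,D]] ∈ M_N({±1}) be Hadamard with A ∈ M_r({±1}) a Hadamard matrix (so AAᵗ = r·I_r) and r ≤ d = N − r, r < N. Then Pol(D) = (1/√N)(D − E) where E = C·X_A·B with X_A = Aᵗ/(r + √(rN)), and ‖E‖_∞ ≤ r√r / (√r + √N). -/

import Mathlib

open Matrix

attribute [local instance] Matrix.normedAddCommGroup

section

open scoped ComplexOrder

/-- The positive semidefinite square root of a positive semidefinite matrix (as in the older
Mathlib, where it was `Matrix.PosSemidef.sqrt`; it has since been removed). -/
noncomputable def Matrix.PosSemidef.sqrt {n 𝕜 : Type*} [Fintype n] [RCLike 𝕜] [DecidableEq n]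
    {A : Matrix n n 𝕜} (hA : A.PosSemidef) : Matrix n n 𝕜 :=
  hA.isHermitian.eigenvectorUnitary.1 *
    Matrix.diagonal (((↑) : ℝ → 𝕜) ∘ Real.sqrt ∘ hA.isHermitian.eigenvalues) *
    (star hA.isHermitian.eigenvectorUnitary : Matrix n n 𝕜)

end

section
open scoped MatrixOrder
lemma my_sqrt_eq {n : Type*} [Fintype n] [DecidableEq n] {A M : Matrix n n ℝ}
    (hA : A.PosSemidef) (hM : M.PosSemidef) (h : M ^ 2 = A) : hA.sqrt = M := by
  have h1 : hA.sqrt = cfc Real.sqrt A := by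
    rw [hA.isHermitian.cfc_eq, Matrix.IsHermitian.cfc, Unitary.conjStarAlgAut_apply]
    rfl
  rw [h1, ← cfcₙ_eq_cfc (hf0 := Real.sqrt_zero), ← CFC.sqrt_eq_real_sqrt A hA.nonneg]
  exact CFC.sqrt_unique (by rw [← h, sq]) hM.nonneg
end

lemma my_flip_had {ι : Type*} [Fintype ι] [DecidableEq ι]
    (M : Matrix ι ι ℝ) (c : ℝ) (hc : c ≠ 0) (h : M * Mᵀ = c • 1) :
    Mᵀ * M = c • 1 := by
  have h1 : M * (c⁻¹ • Mᵀ) = 1 := by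
    rw [Matrix.mul_smul, h, smul_smul, inv_mul_cancel₀ hc, one_smul]
  have h2 := mul_eq_one_comm.mp h1
  rw [Matrix.smul_mul] at h2
  have h3 : c • (c⁻¹ • (Mᵀ * M)) = c • (1 : Matrix ι ι ℝ) := by rw [h2]
  rwa [smul_smul, mul_inv_cancel₀ hc, one_smul] at h3

lemma my_psd_smul {n : Type*} [Fintype n] {M : Matrix n n ℝ}
    (h : M.PosSemidef) {c : ℝ} (hc : 0 ≤ c) : (c • M).PosSemidef := by
  exact h.smul hc

set_option maxHeartbeats 1600000 in
/-- Let `H = [[A,B],[C,D]] ∈ M_N(±1)` be Hadamard with `A ∈ M_r(±1)` itself a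
Hadamard matrix (`AAᵗ = r·I`), `r ≤ d = N − r` and `r < N`. Then
`Pol(D) = (1/√N)(D − E)` where `E = C·(Aᵗ/(r + √(rN)))·B`, and
`‖E‖_∞ ≤ r√r / (√r + √N)`. -/
theorem stmt_8 (N r d : ℕ) (hN : N = r + d) (hrd : r ≤ d) (hrN : r < N)
    (A : Matrix (Fin r) (Fin r) ℝ) (B : Matrix (Fin r) (Fin d) ℝ)
    (C : Matrix (Fin d) (Fin r) ℝ) (D : Matrix (Fin d) (Fin d) ℝ)
    (hsign : ∀ i j, Matrix.fromBlocks A B C D i j = 1 ∨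
      Matrix.fromBlocks A B C D i j = -1)
    (hH : Matrix.fromBlocks A B C D * (Matrix.fromBlocks A B C D)ᵀ
      = (N : ℝ) • 1)
    (hAHad : A * Aᵀ = (r : ℝ) • 1) :
    letI E := ((r : ℝ) + Real.sqrt (r * N))⁻¹ • (C * Aᵀ * B)
    letI U := (Real.sqrt N)⁻¹ • (D - E)
    Uᵀ * U = 1 ∧ D = U * (Matrix.posSemidef_conjTranspose_mul_self D).sqrt ∧
      ‖E‖ ≤ r * Real.sqrt r / (Real.sqrt r + Real.sqrt N) := by
  have hNpos : (0 : ℝ) < N := by exact_mod_cast (Nat.zero_le r).trans_lt hrN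
  have hNne : (N : ℝ) ≠ 0 := hNpos.ne'
  have hrnn : (0 : ℝ) ≤ (r : ℝ) := Nat.cast_nonneg r
  have hq : Real.sqrt ((r : ℝ) * N) * Real.sqrt ((r : ℝ) * N) = (r : ℝ) * N :=
    Real.mul_self_sqrt (by positivity)
  have hd : (d : ℝ) = (N : ℝ) - r := by
    have : (N : ℝ) = (r : ℝ) + d := by exact_mod_cast hN
    linarith
  set s : ℝ := (r : ℝ) + Real.sqrt ((r : ℝ) * N) with hs
  have hsnn : 0 ≤ s := by positivity
  set X : Matrix (Fin d) (Fin d) ℝ := C * Aᵀ * B with hX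
  -- H^T H = N • 1
  have h2 : (Matrix.fromBlocks A B C D)ᵀ * Matrix.fromBlocks A B C D
      = (N : ℝ) • 1 := my_flip_had _ _ hNne hH
  rw [Matrix.fromBlocks_transpose, Matrix.fromBlocks_multiply] at h2
  have hone : ((N : ℝ) • (1 : Matrix (Fin r ⊕ Fin d) (Fin r ⊕ Fin d) ℝ))
      = Matrix.fromBlocks ((N : ℝ) • 1) 0 0 ((N : ℝ) • 1) := by
    rw [← Matrix.fromBlocks_one, Matrix.fromBlocks_smul]; simp
  rw [hone] at h2
  have h11 : Aᵀ * A + Cᵀ * C = (N : ℝ) • 1 := by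
    have := congrArg Matrix.toBlocks₁₁ h2
    simpa [Matrix.toBlocks_fromBlocks₁₁] using this
  have h21 : Bᵀ * A + Dᵀ * C = 0 := by
    have := congrArg Matrix.toBlocks₂₁ h2
    simpa [Matrix.toBlocks_fromBlocks₂₁] using this
  have h22 : Bᵀ * B + Dᵀ * D = (N : ℝ) • 1 := by
    have := congrArg Matrix.toBlocks₂₂ h2
    simpa [Matrix.toBlocks_fromBlocks₂₂] using this
  have hAtA : Aᵀ * A = (r : ℝ) • 1 := by
    rcases Nat.eq_zero_or_pos r with h0 | hpos
    · subst h0; exact Subsingleton.elim _ _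
    · exact my_flip_had A _ (by exact_mod_cast hpos.ne') hAHad
  have hDC : Dᵀ * C = -(Bᵀ * A) := eq_neg_of_add_eq_zero_right h21
  have hDD : Dᵀ * D = (N : ℝ) • 1 - Bᵀ * B := eq_sub_of_add_eq' h22
  have hCC : Cᵀ * C = (d : ℝ) • 1 := by
    have h := eq_sub_of_add_eq' h11
    rw [h, hAtA, ← sub_smul, ← hd]
  have hCD : Cᵀ * D = -(Aᵀ * B) := by
    have := congrArg Matrix.transpose hDC
    simpa [Matrix.transpose_mul] using this
  have hBAAB : Bᵀ * (A * (Aᵀ * B)) = (r : ℝ) • (Bᵀ * B) := by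
    rw [← Matrix.mul_assoc A Aᵀ B, hAHad, Matrix.smul_mul, Matrix.one_mul,
      Matrix.mul_smul]
  have hX1 : Dᵀ * X = -((r : ℝ) • (Bᵀ * B)) := by
    calc Dᵀ * X = (Dᵀ * C) * (Aᵀ * B) := by
          rw [hX]; simp only [Matrix.mul_assoc]
      _ = -(Bᵀ * (A * (Aᵀ * B))) := by
          rw [hDC, Matrix.neg_mul, Matrix.mul_assoc]
      _ = -((r : ℝ) • (Bᵀ * B)) := by rw [hBAAB]
  have hXt : Xᵀ = Bᵀ * (A * Cᵀ) := by
    rw [hX]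
    simp [Matrix.transpose_mul, Matrix.mul_assoc]
  have hX2 : Xᵀ * D = -((r : ℝ) • (Bᵀ * B)) := by
    calc Xᵀ * D = Bᵀ * (A * (Cᵀ * D)) := by
          rw [hXt]; simp only [Matrix.mul_assoc]
      _ = -(Bᵀ * (A * (Aᵀ * B))) := by
          rw [hCD]; simp only [Matrix.mul_neg, Matrix.neg_mul]
      _ = -((r : ℝ) • (Bᵀ * B)) := by rw [hBAAB]
  have hX3 : Xᵀ * X = ((d : ℝ) * r) • (Bᵀ * B) := by
    calc Xᵀ * X = Bᵀ * (A * ((Cᵀ * C) * (Aᵀ * B))) := by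
          rw [hXt, hX]; simp only [Matrix.mul_assoc]
      _ = (d : ℝ) • (Bᵀ * (A * (Aᵀ * B))) := by
          rw [hCC, Matrix.smul_mul, Matrix.one_mul, Matrix.mul_smul, Matrix.mul_smul]
      _ = ((d : ℝ) * r) • (Bᵀ * B) := by rw [hBAAB, smul_smul]
  set E : Matrix (Fin d) (Fin d) ℝ := s⁻¹ • X with hE
  have e1 : Dᵀ * E = s⁻¹ • -((r : ℝ) • (Bᵀ * B)) := by
    rw [hE, Matrix.mul_smul, hX1]
  have e2 : Eᵀ * D = s⁻¹ • -((r : ℝ) • (Bᵀ * B)) := by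
    rw [hE, Matrix.transpose_smul, Matrix.smul_mul, hX2]
  have e3 : Eᵀ * E = (s⁻¹ * s⁻¹) • (((d : ℝ) * r) • (Bᵀ * B)) := by
    rw [hE, Matrix.transpose_smul, Matrix.smul_mul, Matrix.mul_smul, hX3, smul_smul]
  have key : 2 * (r : ℝ) * s + ((N : ℝ) - r) * r = s * s := by
    rw [hs]; ring_nf; nlinarith [hq]
  have hzero : (2 * s⁻¹ * (r : ℝ) + s⁻¹ * s⁻¹ * ((d : ℝ) * r) - 1) • (Bᵀ * B) = 0 := by
    rcases Nat.eq_zero_or_pos r with h0 | hpos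
    · subst h0
      have hB0 : Bᵀ * B = 0 := by
        ext i j; simp [Matrix.mul_apply]
      rw [hB0, smul_zero]
    · have hrpos : (0 : ℝ) < r := by exact_mod_cast hpos
      have hspos : 0 < s := by rw [hs]; positivity
      have hco : 2 * s⁻¹ * (r : ℝ) + s⁻¹ * s⁻¹ * ((d : ℝ) * r) - 1 = 0 := by
        rw [hd]
        have expand : 2 * s⁻¹ * (r : ℝ) + s⁻¹ * s⁻¹ * (((N : ℝ) - r) * r) - 1
            = s⁻¹ * s⁻¹ * (2 * r * s + ((N : ℝ) - r) * r - s * s) := by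
          field_simp
        rw [expand, show 2 * (r : ℝ) * s + ((N : ℝ) - r) * r - s * s = 0 by linarith [key]]
        ring
      rw [hco, zero_smul]
  have hmain : (D - E)ᵀ * (D - E) = (N : ℝ) • 1 := by
    calc (D - E)ᵀ * (D - E)
        = (Dᵀ * D - Dᵀ * E) - (Eᵀ * D - Eᵀ * E) := by
          rw [Matrix.transpose_sub, Matrix.sub_mul, Matrix.mul_sub, Matrix.mul_sub]
      _ = ((N : ℝ) • 1 - Bᵀ * B - s⁻¹ • -((r : ℝ) • (Bᵀ * B)))
          - (s⁻¹ • -((r : ℝ) • (Bᵀ * B)) - (s⁻¹ * s⁻¹) • (((d : ℝ) * r) • (Bᵀ * B))) := by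
          rw [hDD, e1, e2, e3]
      _ = (N : ℝ) • 1 + (2 * s⁻¹ * (r : ℝ) + s⁻¹ * s⁻¹ * ((d : ℝ) * r) - 1) • (Bᵀ * B) := by
          module
      _ = (N : ℝ) • 1 := by rw [hzero, add_zero]
  set U : Matrix (Fin d) (Fin d) ℝ := (Real.sqrt N)⁻¹ • (D - E) with hU
  have hsqN : Real.sqrt N * Real.sqrt N = N := Real.mul_self_sqrt hNpos.le
  have goal1 : Uᵀ * U = 1 := by
    rw [hU, Matrix.transpose_smul, Matrix.smul_mul, Matrix.mul_smul, hmain,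
      smul_smul, smul_smul]
    have : (Real.sqrt N)⁻¹ * (Real.sqrt N)⁻¹ * (N : ℝ) = 1 := by
      rw [← mul_inv, hsqN, inv_mul_cancel₀ hNne]
    rw [this, one_smul]
  have hUUt : U * Uᵀ = 1 := mul_eq_one_comm.mp goal1
  -- part 2
  have hM' : Uᵀ * D = (Real.sqrt N)⁻¹ •
      ((s⁻¹ * r) • ((N : ℝ) • (1 : Matrix (Fin d) (Fin d) ℝ))
        + (1 - s⁻¹ * r) • ((N : ℝ) • 1 - Bᵀ * B)) := by
    rw [hU, Matrix.transpose_smul, Matrix.smul_mul, Matrix.transpose_sub,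
      Matrix.sub_mul, hDD, e2]
    module
  have hr_le_s : (r : ℝ) ≤ s := by rw [hs]; nlinarith [Real.sqrt_nonneg ((r : ℝ) * N)]
  have hc1 : 0 ≤ s⁻¹ * (r : ℝ) := by positivity
  have hc2 : 0 ≤ 1 - s⁻¹ * (r : ℝ) := by
    rcases eq_or_lt_of_le hsnn with h0 | hspos
    · rw [← h0]; simp
    · have h := mul_le_mul_of_nonneg_left hr_le_s (inv_nonneg.mpr hsnn)
      rw [inv_mul_cancel₀ hspos.ne'] at h
      linarith
  have hpsd1 : ((N : ℝ) • (1 : Matrix (Fin d) (Fin d) ℝ)).PosSemidef :=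
    my_psd_smul Matrix.PosSemidef.one hNpos.le
  have hpsd2 : ((N : ℝ) • (1 : Matrix (Fin d) (Fin d) ℝ) - Bᵀ * B).PosSemidef := by
    rw [← hDD]
    have := Matrix.posSemidef_conjTranspose_mul_self D
    rwa [Matrix.conjTranspose_eq_transpose_of_trivial] at this
  have hMpsd : (Uᵀ * D).PosSemidef := by
    rw [hM']
    exact my_psd_smul ((my_psd_smul hpsd1 hc1).add (my_psd_smul hpsd2 hc2))
      (by positivity)
  have hsq2 : (Uᵀ * D) ^ 2 = Dᴴ * D := by
    have hherm : (Uᵀ * D)ᴴ = Uᵀ * D := hMpsd.1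
    calc (Uᵀ * D) ^ 2 = (Uᵀ * D) * (Uᵀ * D) := sq _
      _ = (Uᵀ * D)ᴴ * (Uᵀ * D) := by rw [hherm]
      _ = Dᵀ * (U * (Uᵀ * D)) := by
          rw [Matrix.conjTranspose_eq_transpose_of_trivial, Matrix.transpose_mul,
            Matrix.transpose_transpose]
          simp only [Matrix.mul_assoc]
      _ = Dᴴ * D := by
          rw [← Matrix.mul_assoc U, hUUt, Matrix.one_mul,
            Matrix.conjTranspose_eq_transpose_of_trivial]
  have hsqrt : (Matrix.posSemidef_conjTranspose_mul_self D).sqrt = Uᵀ * D :=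
    my_sqrt_eq _ hMpsd hsq2
  have goal2 : D = U * (Matrix.posSemidef_conjTranspose_mul_self D).sqrt := by
    rw [hsqrt, ← Matrix.mul_assoc, hUUt, Matrix.one_mul]
  -- part 3
  have hAsign : ∀ i j, |A i j| = 1 := by
    intro i j
    rcases hsign (Sum.inl i) (Sum.inl j) with h | h <;>
      simp only [Matrix.fromBlocks_apply₁₁] at h <;> rw [h] <;> norm_num
  have hBsign : ∀ i j, |B i j| = 1 := by
    intro i j
    rcases hsign (Sum.inl i) (Sum.inr j) with h | h <;>
      simp only [Matrix.fromBlocks_apply₁₂] at h <;> rw [h] <;> norm_num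
  have hCsign : ∀ i j, |C i j| = 1 := by
    intro i j
    rcases hsign (Sum.inr i) (Sum.inl j) with h | h <;>
      simp only [Matrix.fromBlocks_apply₂₁] at h <;> rw [h] <;> norm_num
  have hXent : ∀ i j, |X i j| ≤ (r : ℝ) * r := by
    intro i j
    have hinner : ∀ l, |(C * Aᵀ) i l| ≤ (r : ℝ) := by
      intro l
      calc |(C * Aᵀ) i l| = |∑ k, C i k * A l k| := by
            rw [Matrix.mul_apply]
            simp only [Matrix.transpose_apply]
        _ ≤ ∑ k, |C i k * A l k| := Finset.abs_sum_le_sum_abs _ _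
        _ = ∑ _k : Fin r, (1 : ℝ) := by
            refine Finset.sum_congr rfl fun k _ => ?_
            rw [abs_mul, hCsign, hAsign, mul_one]
        _ = (r : ℝ) := by simp
    calc |X i j| = |∑ l, (C * Aᵀ) i l * B l j| := by rw [hX, Matrix.mul_apply]
      _ ≤ ∑ l, |(C * Aᵀ) i l * B l j| := Finset.abs_sum_le_sum_abs _ _
      _ = ∑ l, |(C * Aᵀ) i l| := by
          refine Finset.sum_congr rfl fun l _ => ?_
          rw [abs_mul, hBsign, mul_one]
      _ ≤ ∑ _l : Fin r, (r : ℝ) := Finset.sum_le_sum (fun l _ => hinner l)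
      _ = (r : ℝ) * r := by simp [mul_comm]
  have hsqrtNpos : 0 < Real.sqrt N := Real.sqrt_pos.mpr hNpos
  have hRHSnn : 0 ≤ (r : ℝ) * Real.sqrt r / (Real.sqrt r + Real.sqrt N) := by positivity
  have hcmp : s⁻¹ * ((r : ℝ) * r) ≤ (r : ℝ) * Real.sqrt r / (Real.sqrt r + Real.sqrt N) := by
    rcases Nat.eq_zero_or_pos r with h0 | hpos
    · subst h0; simpa using hRHSnn
    · have hrpos : (0 : ℝ) < r := by exact_mod_cast hpos
      have hrr : Real.sqrt r * Real.sqrt r = (r : ℝ) := Real.mul_self_sqrt hrnn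
      have hsqrtrpos : 0 < Real.sqrt r := Real.sqrt_pos.mpr hrpos
      have hsr : Real.sqrt ((r : ℝ) * N) = Real.sqrt r * Real.sqrt N :=
        Real.sqrt_mul hrnn _
      have hsfac : s = Real.sqrt r * (Real.sqrt r + Real.sqrt N) := by
        rw [hs, hsr]; nlinarith [hrr]
      apply le_of_eq
      rw [hsfac]
      have hden : (0 : ℝ) < Real.sqrt r + Real.sqrt N := by positivity
      field_simp
      linear_combination -hrr
  have goal3 : ‖E‖ ≤ (r : ℝ) * Real.sqrt r / (Real.sqrt r + Real.sqrt N) := by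
    rw [Matrix.norm_le_iff hRHSnn]
    intro i j
    have hEij : E i j = s⁻¹ * X i j := by rw [hE]; simp [Matrix.smul_apply]
    calc ‖E i j‖ = |s⁻¹ * X i j| := by rw [Real.norm_eq_abs, hEij]
      _ = s⁻¹ * |X i j| := by rw [abs_mul, abs_of_nonneg (inv_nonneg.mpr hsnn)]
      _ ≤ s⁻¹ * ((r : ℝ) * r) :=
          mul_le_mul_of_nonneg_left (hXent i j) (inv_nonneg.mpr hsnn)
      _ ≤ _ := hcmp
  exact ⟨goal1, goal2, goal3⟩
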